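/- Let h : ℂ → ℂ be defined by h(z) = (4/27)·(z²−z+1)³/(z²·(1−z)²), and let g : ℂ → ℂ be complex-differentiable at a point z with g(z) ≠ 0 and g(z) ≠ 1. If the derivative of the composition h ∘ g vanishes at z, then either the derivative of g vanishes at z, or h(g(z)) ∈ {0, 1}. (Hence the finite critical values of the composition h ∘ g are contained in {0, 1} together with the h-images of the critical values of g; this is why β = h(β₀) is again a Belyi function when β₀ is.) -/

import Mathlib

noncomputable def h : ℂ → ℂ :=
  fun z => (4 / 27) * (z ^ 2 - z + 1) ^ 3 / (z ^ 2 * (1 - z) ^ 2)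

lemma h_hasDerivAt (w : ℂ) (h0 : w ≠ 0) (h1 : w ≠ 1) :
    HasDerivAt h
      (((4/27) * (3 * (w^2 - w + 1)^2 * (2*w - 1)) * (w^2 * (1 - w)^2)
        - (4/27) * (w^2 - w + 1)^3 * (2*w * (1 - w)^2 + w^2 * (2 * (1 - w) * (-1))))
        / (w^2 * (1 - w)^2)^2) w := by
  have hq : w^2 * (1 - w)^2 ≠ 0 :=
    mul_ne_zero (pow_ne_zero _ h0) (pow_ne_zero _ (sub_ne_zero.2 (Ne.symm h1)))
  have hin : HasDerivAt (fun z : ℂ => z^2 - z + 1) (2*w - 1) w := by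
    simpa using (((hasDerivAt_pow 2 w).sub (hasDerivAt_id w)).add_const 1)
  have hp : HasDerivAt (fun z : ℂ => (4/27 : ℂ) * (z^2 - z + 1)^3)
      ((4/27) * (3 * (w^2 - w + 1)^2 * (2*w - 1))) w := by
    have := (hin.pow 3).const_mul (4/27 : ℂ)
    exact this.congr_deriv (by norm_num)
  have h1m : HasDerivAt (fun z : ℂ => (1 - z)^2) (2 * (1 - w) * (-1)) w := by
    have : HasDerivAt (fun z : ℂ => 1 - z) (-1) w := by
      simpa using (hasDerivAt_id w).const_sub 1
    have := this.pow 2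
    exact this.congr_deriv (by norm_num)
  have hqd : HasDerivAt (fun z : ℂ => z^2 * (1 - z)^2)
      (2*w * (1 - w)^2 + w^2 * (2 * (1 - w) * (-1))) w := by
    have := (hasDerivAt_pow 2 w).mul h1m
    exact this.congr_deriv (by norm_num)
  exact hp.div hqd hq

theorem stmt_10 :
    ∀ (g : ℂ → ℂ) (z : ℂ), DifferentiableAt ℂ g z → g z ≠ 0 → g z ≠ 1 →
      deriv (h ∘ g) z = 0 → deriv g z = 0 ∨ h (g z) = 0 ∨ h (g z) = 1 := by
  intro g z hg hg0 hg1 hcomp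
  set w := g z with hw
  have hD := h_hasDerivAt w hg0 hg1
  have hcr : deriv h w * deriv g z = 0 := by
    rw [← deriv_comp z hD.differentiableAt hg]
    exact hcomp
  rcases mul_eq_zero.1 hcr with hdh | hdg
  · right
    have hw0 : w ≠ 0 := hg0
    have hw1 : (1 : ℂ) - w ≠ 0 := sub_ne_zero.2 (Ne.symm hg1)
    have hq : w^2 * (1 - w)^2 ≠ 0 := mul_ne_zero (pow_ne_zero _ hw0) (pow_ne_zero _ hw1)
    have hnum : (0 : ℂ) =
        4 * (3 * (w ^ 2 - w + 1) ^ 2 * (2 * w - 1)) * (w ^ 2 * (1 - w) ^ 2) -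
          4 * (w ^ 2 - w + 1) ^ 3 * (2 * w * (1 - w) ^ 2 + -(w ^ 2 * (2 * (1 - w)))) := by
      have := hD.deriv
      rw [hdh] at this
      field_simp at this
      linear_combination (w * (1 - w)) * this
    have hfac : (4 : ℂ) * w * (1 - w) *
        ((w ^ 2 - w + 1) ^ 2 * ((2 * w - 1) * ((w + 1) * (2 - w)))) = 0 := by
      linear_combination -hnum
    have hX : (w ^ 2 - w + 1) ^ 2 * ((2 * w - 1) * ((w + 1) * (2 - w))) = 0 := by
      rcases mul_eq_zero.1 hfac with h' | h'
      · rcases mul_eq_zero.1 h' with h'' | h''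
        · rcases mul_eq_zero.1 h'' with h3 | h3
          · norm_num at h3
          · exact absurd h3 hw0
        · exact absurd h'' hw1
      · exact h'
    rcases mul_eq_zero.1 hX with hc | hc
    · left
      have hc' : w ^ 2 - w + 1 = 0 := pow_eq_zero_iff (by norm_num) |>.1 hc
      simp only [h]
      rw [hc']
      simp
    · rcases mul_eq_zero.1 hc with hc' | hc'
      · right
        have : w = 1 / 2 := by linear_combination hc' / 2
        rw [this]
        norm_num [h]
      · rcases mul_eq_zero.1 hc' with hc'' | hc''
        · right
          have : w = -1 := by linear_combination hc''
          rw [this]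
          norm_num [h]
        · right
          have : w = 2 := by linear_combination -hc''
          rw [this]
          norm_num [h]
  · exact Or.inl hdg
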